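/- Let (A, Con, ⊢, Δ) be an information system with witnesses and x, y, z states with x ⊆ z and y ⊆ z. Then the union ⋃{[Z]_k : (k,Z) ∈ Con, k ∈ z, Z ⊆ x ∪ y finite} is the least upper bound of x and y in the set of states contained in z. -/
import Mathlib


variable {A : Type*}

/-- An information system with witnesses `(A, Con, ⊢, Δ)`. -/
structure IsISW (Δ : A) (Con : A → Finset A → Prop)
    (ent : A → Finset A → A → Prop) : Prop where
  dom : ∀ i X a, ent i X a → Con i X
  ax1 : ∀ i, Con i {i}
  ax2 : ∀ i (X Y : Finset A), Y ⊆ X → Con i X → Con i Y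
  ax3 : ∀ i, ent i ∅ Δ
  ax4 : ∀ i (X Y : Finset A), Con i X → (∀ b ∈ Y, ent i X b) → Con i Y
  ax5 : ∀ i (X Y : Finset A) (a : A), Con i X → Con i Y → X ⊆ Y → ent i X a → ent i Y a
  ax6 : ∀ i (X Y : Finset A) (a : A), Con i X → (∀ b ∈ Y, ent i X b) → ent i Y a → ent i X a
  ax7 : ∀ i j : A, Con j {i} → ∀ X, Con i X → Con j X
  ax8 : ∀ (i j : A) (X : Finset A) (a : A), Con j {i} → Con i X → ent i X a → ent j X a
  ax9 : ∀ (i j : A) (X : Finset A) (a : A), Con j {i} → Con i X → ent j X a → ent i X a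
  ax10 : ∀ i (X Y : Finset A), Con i X → (∀ b ∈ Y, ent i X b) →
      ∃ e Z, Con e Z ∧ ent i X e ∧ (∀ b ∈ Z, ent i X b) ∧ (∀ b ∈ Y, ent e Z b)

/-- A state of an information system with witnesses: finitely consistent with a
witness in the state (ST1), entailment-closed (ST2), every element derivable (ST3). -/
def IsState (Con : A → Finset A → Prop) (ent : A → Finset A → A → Prop)
    (x : Set A) : Prop :=
  (∀ F : Finset A, ↑F ⊆ x → ∃ i ∈ x, Con i F) ∧
  (∀ i ∈ x, ∀ X : Finset A, ↑X ⊆ x → Con i X → ∀ a, ent i X a → a ∈ x) ∧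
  (∀ a ∈ x, ∃ i ∈ x, ∃ X : Finset A, ↑X ⊆ x ∧ Con i X ∧ ent i X a)

theorem stmt11 {Δ : A} {Con : A → Finset A → Prop} {ent : A → Finset A → A → Prop}
    (h : IsISW Δ Con ent) (x y z : Set A)
    (hx : IsState Con ent x) (hy : IsState Con ent y) (hz : IsState Con ent z)
    (hxz : x ⊆ z) (hyz : y ⊆ z) :
    IsState Con ent
      (⋃₀ (setOf fun s : Set A => ∃ (k : A) (Z : Finset A),
        Con k Z ∧ k ∈ z ∧ ↑Z ⊆ x ∪ y ∧ s = {a : A | ent k Z a})) ∧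
    (⋃₀ (setOf fun s : Set A => ∃ (k : A) (Z : Finset A),
        Con k Z ∧ k ∈ z ∧ ↑Z ⊆ x ∪ y ∧ s = {a : A | ent k Z a})) ⊆ z ∧
    x ⊆ (⋃₀ (setOf fun s : Set A => ∃ (k : A) (Z : Finset A),
        Con k Z ∧ k ∈ z ∧ ↑Z ⊆ x ∪ y ∧ s = {a : A | ent k Z a})) ∧
    y ⊆ (⋃₀ (setOf fun s : Set A => ∃ (k : A) (Z : Finset A),
        Con k Z ∧ k ∈ z ∧ ↑Z ⊆ x ∪ y ∧ s = {a : A | ent k Z a})) ∧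
    ∀ w : Set A, IsState Con ent w → w ⊆ z → x ⊆ w → y ⊆ w →
      (⋃₀ (setOf fun s : Set A => ∃ (k : A) (Z : Finset A),
        Con k Z ∧ k ∈ z ∧ ↑Z ⊆ x ∪ y ∧ s = {a : A | ent k Z a})) ⊆ w := by
  classical
  obtain ⟨hx1, hx2, hx3⟩ := hx
  obtain ⟨hy1, hy2, hy3⟩ := hy
  obtain ⟨hz1, hz2, hz3⟩ := hz
  set U : Set A := ⋃₀ (setOf fun s : Set A => ∃ (k : A) (Z : Finset A),
      Con k Z ∧ k ∈ z ∧ ↑Z ⊆ x ∪ y ∧ s = {a : A | ent k Z a}) with hUdef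
  have hmem : ∀ a : A, a ∈ U ↔ ∃ (k : A) (Z : Finset A),
      Con k Z ∧ k ∈ z ∧ ↑Z ⊆ x ∪ y ∧ ent k Z a := by
    intro a
    constructor
    · rintro ⟨s, ⟨k, Z, h1, h2, h3, rfl⟩, ha⟩
      exact ⟨k, Z, h1, h2, h3, ha⟩
    · rintro ⟨k, Z, h1, h2, h3, ha⟩
      exact ⟨{a | ent k Z a}, ⟨k, Z, h1, h2, h3, rfl⟩, ha⟩
  have hUz : U ⊆ z := by
    intro a ha
    obtain ⟨k, Z, h1, h2, h3, h4⟩ := (hmem a).1 ha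
    exact hz2 k h2 Z (fun b hb => by
      rcases h3 hb with hb' | hb'
      exacts [hxz hb', hyz hb']) h1 a h4
  have key : ∀ b : A, ∃ (k : A) (Z : Finset A), b ∈ U →
      Con k Z ∧ k ∈ z ∧ ↑Z ⊆ x ∪ y ∧ ent k Z b := by
    intro b
    by_cases hb : b ∈ U
    · obtain ⟨k, Z, hk⟩ := (hmem b).1 hb
      exact ⟨k, Z, fun _ => hk⟩
    · exact ⟨Δ, ∅, fun hb' => absurd hb' hb⟩
  choose K W hKW using key
  have st1 : ∀ F : Finset A, ↑F ⊆ U → ∃ i ∈ U, Con i F := by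
    intro F hF
    have hFU : ∀ b ∈ F, b ∈ U := fun b hb => hF hb
    set G : Finset A := F.image K ∪ F.biUnion W with hG
    have hGz : ↑G ⊆ z := by
      intro c hc
      simp only [hG, Finset.coe_union, Set.mem_union, Finset.coe_image,
        Set.mem_image, Finset.mem_coe, Finset.mem_biUnion] at hc
      rcases hc with ⟨b, hb, rfl⟩ | ⟨b, hb, hc⟩
      · exact (hKW b (hFU b hb)).2.1
      · rcases (hKW b (hFU b hb)).2.2.1 hc with h' | h'
        exacts [hxz h', hyz h']
    obtain ⟨m, hmz, hmG⟩ := hz1 G hGz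
    set Z : Finset A := F.biUnion W with hZ
    have hConZ : Con m Z := h.ax2 m G Z (by simp [hG, hZ]) hmG
    have hZxy : ↑Z ⊆ x ∪ y := by
      intro c hc
      simp only [hZ, Finset.coe_biUnion, Set.mem_iUnion, Finset.mem_coe] at hc
      obtain ⟨b, hb, hc⟩ := hc
      exact (hKW b (hFU b hb)).2.2.1 hc
    have hentZ : ∀ b ∈ F, ent m Z b := by
      intro b hb
      have h1 := hKW b (hFU b hb)
      have hKb : Con m {K b} := h.ax2 m G {K b} (by
        intro c hc
        simp only [Finset.mem_singleton] at hc
        subst hc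
        simp only [hG, Finset.mem_union, Finset.mem_image]
        exact Or.inl ⟨b, hb, rfl⟩) hmG
      have h2 : ent m (W b) b := h.ax8 (K b) m (W b) b hKb h1.1 h1.2.2.2
      have hWb : Con m (W b) := h.ax2 m G (W b) (by
        intro c hc
        simp only [hG, Finset.mem_union]
        exact Or.inr (Finset.mem_biUnion.2 ⟨b, hb, hc⟩)) hmG
      exact h.ax5 m (W b) Z b hWb hConZ
        (fun c hc => Finset.mem_biUnion.2 ⟨b, hb, hc⟩) h2
    obtain ⟨e, V, hCeV, hme, hV, heF⟩ := h.ax10 m Z F hConZ hentZ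
    exact ⟨e, (hmem e).2 ⟨m, Z, hConZ, hmz, hZxy, hme⟩, h.ax4 e V F hCeV heF⟩
  have st2 : ∀ i ∈ U, ∀ X : Finset A, ↑X ⊆ U → Con i X → ∀ a, ent i X a → a ∈ U := by
    intro i hi X hX hCiX a haX
    have hXU : ∀ b ∈ X, b ∈ U := fun b hb => hX hb
    set G : Finset A := insert i (X.image K ∪ X.biUnion W) with hG
    have hGz : ↑G ⊆ z := by
      intro c hc
      simp only [hG, Finset.coe_insert, Set.mem_insert_iff, Finset.coe_union,
        Set.mem_union, Finset.coe_image, Set.mem_image, Finset.mem_coe,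
        Finset.mem_biUnion] at hc
      rcases hc with rfl | ⟨b, hb, rfl⟩ | ⟨b, hb, hc⟩
      · exact hUz hi
      · exact (hKW b (hXU b hb)).2.1
      · rcases (hKW b (hXU b hb)).2.2.1 hc with h' | h'
        exacts [hxz h', hyz h']
    obtain ⟨m, hmz, hmG⟩ := hz1 G hGz
    set Z : Finset A := X.biUnion W with hZ
    have hConZ : Con m Z := h.ax2 m G Z (by
      intro c hc
      simp only [hG, Finset.mem_insert, Finset.mem_union]
      exact Or.inr (Or.inr hc)) hmG
    have hZxy : ↑Z ⊆ x ∪ y := by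
      intro c hc
      simp only [hZ, Finset.coe_biUnion, Set.mem_iUnion, Finset.mem_coe] at hc
      obtain ⟨b, hb, hc⟩ := hc
      exact (hKW b (hXU b hb)).2.2.1 hc
    have hentZ : ∀ b ∈ X, ent m Z b := by
      intro b hb
      have h1 := hKW b (hXU b hb)
      have hKb : Con m {K b} := h.ax2 m G {K b} (by
        intro c hc
        simp only [Finset.mem_singleton] at hc
        subst hc
        simp only [hG, Finset.mem_insert, Finset.mem_union, Finset.mem_image]
        exact Or.inr (Or.inl ⟨b, hb, rfl⟩)) hmG
      have h2 : ent m (W b) b := h.ax8 (K b) m (W b) b hKb h1.1 h1.2.2.2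
      have hWb : Con m (W b) := h.ax2 m G (W b) (by
        intro c hc
        simp only [hG, Finset.mem_insert, Finset.mem_union]
        exact Or.inr (Or.inr (Finset.mem_biUnion.2 ⟨b, hb, hc⟩))) hmG
      exact h.ax5 m (W b) Z b hWb hConZ
        (fun c hc => Finset.mem_biUnion.2 ⟨b, hb, hc⟩) h2
    have hmi : Con m {i} := h.ax2 m G {i} (by simp [hG]) hmG
    have hmXa : ent m X a := h.ax8 i m X a hmi hCiX haX
    exact (hmem a).2 ⟨m, Z, hConZ, hmz, hZxy, h.ax6 m Z X a hConZ hentZ hmXa⟩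
  have st3 : ∀ a ∈ U, ∃ i ∈ U, ∃ X : Finset A, ↑X ⊆ U ∧ Con i X ∧ ent i X a := by
    intro a ha
    obtain ⟨k, Z, h1, h2, h3, h4⟩ := (hmem a).1 ha
    obtain ⟨e, V, hCeV, hke, hV, heV⟩ := h.ax10 k Z {a} h1 (by
      intro b hb
      simp only [Finset.mem_singleton] at hb
      subst hb
      exact h4)
    refine ⟨e, (hmem e).2 ⟨k, Z, h1, h2, h3, hke⟩, V, ?_, hCeV,
      heV a (Finset.mem_singleton_self a)⟩
    intro c hc
    exact (hmem c).2 ⟨k, Z, h1, h2, h3, hV c hc⟩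
  have hxU : x ⊆ U := by
    intro a ha
    obtain ⟨i, hi, X, hXx, hCX, hent⟩ := hx3 a ha
    exact (hmem a).2 ⟨i, X, hCX, hxz hi, fun c hc => Set.mem_union_left y (hXx hc), hent⟩
  have hyU : y ⊆ U := by
    intro a ha
    obtain ⟨i, hi, X, hXy, hCX, hent⟩ := hy3 a ha
    exact (hmem a).2 ⟨i, X, hCX, hyz hi, fun c hc => Set.mem_union_right x (hXy hc), hent⟩
  refine ⟨⟨st1, st2, st3⟩, hUz, hxU, hyU, ?_⟩
  rintro w ⟨hw1, hw2, hw3⟩ hwz hxw hyw a ha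
  obtain ⟨k, Z, h1, h2, h3, h4⟩ := (hmem a).1 ha
  have hZw : ↑Z ⊆ w := fun c hc => (h3 hc).elim (fun h' => hxw h') (fun h' => hyw h')
  obtain ⟨j, hjw, hCjZ⟩ := hw1 Z hZw
  obtain ⟨m, hmz, hm⟩ := hz1 {j, k} (by
    intro c hc
    simp only [Finset.coe_insert, Set.mem_insert_iff, Finset.coe_singleton,
      Set.mem_singleton_iff] at hc
    rcases hc with rfl | rfl
    exacts [hwz hjw, h2])
  have hmk : Con m {k} := h.ax2 m {j, k} {k} (by simp) hm
  have hmj : Con m {j} := h.ax2 m {j, k} {j} (by simp) hm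
  have h5 : ent m Z a := h.ax8 k m Z a hmk h1 h4
  have h6 : ent j Z a := h.ax9 j m Z a hmj hCjZ h5
  exact hw2 j hjw Z hZw hCjZ a h6
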